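/- Let φ, ψ : ℝ → ℂ be continuous even functions such that |φ| and |ψ| are strictly increasing on (0,∞), |φ(t)|/|ψ(t)| is non-increasing on (0,∞), ψ(0) = 0, and |ψ(t)| → +∞ as t → +∞. Let F : ℝ → ℝ satisfy |φ(t)|² = F(|ψ(t)|²) for all t ∈ ℝ. Then for every δ > 0 and every b > 0, δ·√(F(1/δ²)) ≤ |φ(b)|/|ψ(b)| + N(b)·δ; consequently δ·√(F(1/δ²)) ≤ inf_{b>0} { |φ(b)|/|ψ(b)| + N(b)·δ }. -/

import Mathlib

/-- The truncation `φ_b(t) = φ(t) − (φ(b)/ψ(b))·ψ(t)` for `|t| ≤ b`, `0` otherwise. -/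
noncomputable def phib (φ ψ : ℝ → ℂ) (b : ℝ) : ℝ → ℂ :=
  fun t => if |t| ≤ b then φ t - (φ b / ψ b) * ψ t else 0

/-- `N(b) = sup_{t ∈ ℝ} |φ_b(t)|`. -/
noncomputable def Nb (φ ψ : ℝ → ℂ) (b : ℝ) : ℝ :=
  ⨆ t : ℝ, ‖phib φ ψ b t‖

/-- If `ψ(0) = 0`, `|ψ(t)| → +∞` as `t → +∞`, and `|φ(t)|² = F(|ψ(t)|²)`, then
for every `δ > 0` and every `b > 0`,
`δ·√(F(1/δ²)) ≤ |φ(b)|/|ψ(b)| + N(b)·δ`; consequently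
`δ·√(F(1/δ²)) ≤ inf_{b > 0} (|φ(b)|/|ψ(b)| + N(b)·δ)`. -/
theorem modulus_lower_bnd_le_l_delta
    (φ ψ : ℝ → ℂ) (hφc : Continuous φ) (hψc : Continuous ψ)
    (hφe : ∀ t : ℝ, φ (-t) = φ t) (hψe : ∀ t : ℝ, ψ (-t) = ψ t)
    (hφm : StrictMonoOn (fun t => ‖φ t‖) (Set.Ioi (0 : ℝ)))
    (hψm : StrictMonoOn (fun t => ‖ψ t‖) (Set.Ioi (0 : ℝ)))
    (hratio : AntitoneOn (fun t => ‖φ t‖ / ‖ψ t‖) (Set.Ioi (0 : ℝ)))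
    (hψ0 : ψ 0 = 0)
    (hψtop : Filter.Tendsto (fun t => ‖ψ t‖) Filter.atTop Filter.atTop)
    (F : ℝ → ℝ) (hFφψ : ∀ t : ℝ, ‖φ t‖ ^ 2 = F (‖ψ t‖ ^ 2)) :
    ∀ δ : ℝ, 0 < δ →
      (∀ b : ℝ, 0 < b →
        δ * Real.sqrt (F (1 / δ ^ 2)) ≤ ‖φ b‖ / ‖ψ b‖ + Nb φ ψ b * δ) ∧
      δ * Real.sqrt (F (1 / δ ^ 2))
        ≤ ⨅ b : {b : ℝ // 0 < b}, (‖φ (b : ℝ)‖ / ‖ψ (b : ℝ)‖ + Nb φ ψ (b : ℝ) * δ) := by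

  intro δ hδ
  have hδinv : 0 < 1 / δ := by positivity
  -- find T with ‖ψ T‖ ≥ 1/δ and T ≥ 0
  obtain ⟨T, hT1, hT0⟩ :=
    ((hψtop.eventually_ge_atTop (1 / δ)).and (Filter.eventually_ge_atTop (0 : ℝ))).exists
  -- IVT: find t₀ with ‖ψ t₀‖ = 1/δ
  have hIVT := intermediate_value_Icc hT0 (hψc.norm.continuousOn (s := Set.Icc 0 T))
  have hmem : (1 / δ) ∈ Set.Icc ‖ψ 0‖ ‖ψ T‖ := by
    rw [hψ0]; simp only [norm_zero]; exact ⟨hδinv.le, hT1⟩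
  obtain ⟨t₀, ht₀mem, ht₀⟩ := hIVT hmem
  have ht₀val : ‖ψ t₀‖ = 1 / δ := ht₀
  have ht₀pos : 0 < t₀ := by
    rcases lt_or_eq_of_le ht₀mem.1 with h | h
    · exact h
    · exfalso
      rw [← h, hψ0, norm_zero] at ht₀val
      exact absurd ht₀val.symm (ne_of_gt hδinv)
  have hsqrt : Real.sqrt (F (1 / δ ^ 2)) = ‖φ t₀‖ := by
    have h1 : (1 : ℝ) / δ ^ 2 = ‖ψ t₀‖ ^ 2 := by rw [ht₀val]; field_simp
    rw [h1, ← hFφψ t₀, Real.sqrt_sq (norm_nonneg _)]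
  have main : ∀ b : ℝ, 0 < b →
      δ * Real.sqrt (F (1 / δ ^ 2)) ≤ ‖φ b‖ / ‖ψ b‖ + Nb φ ψ b * δ := by
    intro b hb
    have hψb : 0 < ‖ψ b‖ := by
      have h2 := hψm (Set.mem_Ioi.mpr (half_pos hb)) (Set.mem_Ioi.mpr hb) (half_lt_self hb)
      exact lt_of_le_of_lt (norm_nonneg _) h2
    -- boundedness of phib
    have hbdd : BddAbove (Set.range fun t => ‖phib φ ψ b t‖) := by
      obtain ⟨M, hM⟩ := ((isCompact_Icc (a := -b) (b := b)).image
        ((hφc.sub (continuous_const.mul hψc)).norm)).bddAbove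
      refine ⟨max M 0, ?_⟩
      rintro x ⟨t, rfl⟩
      simp only [phib]
      split_ifs with ht
      · exact le_max_of_le_left (hM ⟨t, abs_le.mp ht, rfl⟩)
      · simp
    have hN0 : 0 ≤ Nb φ ψ b :=
      le_trans (norm_nonneg (phib φ ψ b 0)) (le_ciSup hbdd 0)
    rw [hsqrt]
    rcases le_or_gt t₀ b with hcase | hcase
    · -- t₀ ≤ b
      have hphib : phib φ ψ b t₀ = φ t₀ - (φ b / ψ b) * ψ t₀ := by
        unfold phib
        rw [if_pos (by rw [abs_of_nonneg ht₀pos.le]; exact hcase)]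
      have h1 : ‖φ t₀‖ ≤ ‖phib φ ψ b t₀‖ + ‖φ b‖ / ‖ψ b‖ * ‖ψ t₀‖ := by
        have := norm_add_le (φ t₀ - (φ b / ψ b) * ψ t₀) ((φ b / ψ b) * ψ t₀)
        simp only [sub_add_cancel] at this
        calc ‖φ t₀‖ ≤ ‖φ t₀ - (φ b / ψ b) * ψ t₀‖ + ‖(φ b / ψ b) * ψ t₀‖ := this
          _ = ‖phib φ ψ b t₀‖ + ‖φ b‖ / ‖ψ b‖ * ‖ψ t₀‖ := by
            rw [hphib, norm_mul, norm_div]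
      have h2 : ‖phib φ ψ b t₀‖ ≤ Nb φ ψ b := le_ciSup hbdd t₀
      have h3 : ‖φ t₀‖ ≤ Nb φ ψ b + ‖φ b‖ / ‖ψ b‖ * (1 / δ) := by
        rw [← ht₀val]; linarith
      have h4 : δ * (Nb φ ψ b + ‖φ b‖ / ‖ψ b‖ * (1 / δ))
          = ‖φ b‖ / ‖ψ b‖ + Nb φ ψ b * δ := by
        have hcancel : δ * (‖φ b‖ / ‖ψ b‖ * (1 / δ)) = ‖φ b‖ / ‖ψ b‖ := by
          rw [mul_comm, mul_assoc, one_div_mul_cancel (ne_of_gt hδ), mul_one]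
        rw [mul_add, hcancel]; ring
      calc δ * ‖φ t₀‖ ≤ δ * (Nb φ ψ b + ‖φ b‖ / ‖ψ b‖ * (1 / δ)) := by
            exact mul_le_mul_of_nonneg_left h3 hδ.le
        _ = ‖φ b‖ / ‖ψ b‖ + Nb φ ψ b * δ := h4
    · -- b < t₀
      have hr : ‖φ t₀‖ / ‖ψ t₀‖ ≤ ‖φ b‖ / ‖ψ b‖ :=
        hratio (Set.mem_Ioi.mpr hb) (Set.mem_Ioi.mpr ht₀pos) hcase.le
      have heq : δ * ‖φ t₀‖ = ‖φ t₀‖ / ‖ψ t₀‖ := by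
        rw [ht₀val]; field_simp
      have hNδ : 0 ≤ Nb φ ψ b * δ := mul_nonneg hN0 hδ.le
      linarith [heq ▸ hr]
  refine ⟨main, ?_⟩
  haveI : Nonempty {b : ℝ // 0 < b} := ⟨⟨1, one_pos⟩⟩
  exact le_ciInf fun b => main b.1 b.2
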